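/- The coproduct Δ on H is coassociative and cocommutative, ε is a counit for Δ, and both Δ and ε are homomorphisms of unital ℚ-algebras (where H⊗H carries the product induced by the Hall product). Hence (H, ×, δ_∅, Δ, ε) is a cocommutative bialgebra over ℚ. -/

import Mathlib

open scoped Classical

/-- Concrete (labeled) rooted trees: a root with a list of subtrees. -/
inductive RTree : Type
  | node : List RTree → RTree

/-- Shapes of admissible cuts: at each tree, either the full cut
(everything, including the root, goes to the pruned part `P`), or a choice of
an admissible cut of each child subtree.  A `full` occurring strictly inside
corresponds to cutting the edge above that vertex. -/
inductive CutShape : Type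
  | full
  | branch : List CutShape → CutShape

namespace CK

/-- Number of vertices of a forest. -/
def sizeL : List RTree → ℕ
  | [] => 0
  | .node l :: ts => 1 + sizeL l + sizeL ts

/-- All admissible cuts of a forest (a choice of admissible cut of each tree). -/
def cutsF : List RTree → List (List CutShape)
  | [] => [[]]
  | .node l :: ts =>
      (CutShape.full :: (cutsF l).map CutShape.branch).flatMap
        fun c => (cutsF ts).map (c :: ·)

/-- The root part `R_C(F)` of a cut. -/
def Rcut : List RTree → List CutShape → List RTree
  | [], _ => []
  | _ :: _, [] => []
  | .node _ :: ts, .full :: cs => Rcut ts cs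
  | .node l :: ts, .branch ds :: cs => RTree.node (Rcut l ds) :: Rcut ts cs

/-- The pruned part `P_C(F)` of a cut. -/
def Pcut : List RTree → List CutShape → List RTree
  | [], _ => []
  | _ :: _, [] => []
  | .node l :: ts, .full :: cs => RTree.node l :: Pcut ts cs
  | .node l :: ts, .branch ds :: cs => Pcut l ds ++ Pcut ts cs

/-- Number of `full`s occurring in a cut. -/
def fullsL : List CutShape → ℕ
  | [] => 0
  | .full :: cs => 1 + fullsL cs
  | .branch ds :: cs => fullsL ds + fullsL cs

/-- A list of concrete forests containing (representatives of) every forest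
with at most `n` vertices. -/
def forestsUpTo : ℕ → List (List RTree)
  | 0 => [[]]
  | n+1 => [] :: (forestsUpTo n).flatMap fun l => (forestsUpTo n).map fun F => RTree.node l :: F

/-- Isomorphism of rooted trees (non-planar): a root-preserving bijection, i.e.
the lists of subtrees agree up to permutation and isomorphism. -/
inductive Iso : RTree → RTree → Prop
  | node {l₁ l l₂ : List RTree} : List.Forall₂ Iso l₁ l → l.Perm l₂ → Iso (.node l₁) (.node l₂)

/-- Isomorphism classes of rooted trees. -/
abbrev TreeClass : Type := Quot Iso

/-- Isomorphism classes of rooted forests = multisets of tree classes.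
The empty forest is `0`. -/
abbrev ForestClass : Type := Multiset TreeClass

/-- Isomorphism class of a tree. -/
def clT (t : RTree) : TreeClass := Quot.mk _ t

/-- Isomorphism class of a forest. -/
def clF (F : List RTree) : ForestClass := (F.map clT : List TreeClass)

/-- A concrete representative of a forest class. -/
noncomputable def repF (M : ForestClass) : List RTree := M.toList.map Quot.out

/-- A concrete representative of a tree class. -/
noncomputable def repT (T : TreeClass) : RTree := T.out

/-- Number of vertices of a forest class. -/
noncomputable def sizeC (M : ForestClass) : ℕ := sizeL (repF M)

/-- Number of vertices of a tree class. -/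
noncomputable def sizeT (T : TreeClass) : ℕ := sizeL [repT T]

/-- The Hall algebra `H`: finitely supported ℚ-valued functions on
isomorphism classes of rooted forests, with basis the delta functions. -/
abbrev H : Type := ForestClass →₀ ℚ

/-- The basis element `δ_A` of `H`. -/
noncomputable def delta (A : ForestClass) : H := Finsupp.single A 1

/-- `n(A,B;M)`: the number of admissible cuts `C` of `M` with
`P_C(M) ≅ A` and `R_C(M) ≅ B`. -/
noncomputable def nCuts (A B M : ForestClass) : ℕ :=
  (cutsF (repF M)).countP fun c =>
    decide (clF (Pcut (repF M) c) = A ∧ clF (Rcut (repF M) c) = B)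

/-- A finite set of forest classes containing all classes with at most `n`
vertices. -/
noncomputable def forestCand (n : ℕ) : Finset ForestClass :=
  ((forestsUpTo n).map clF).toFinset

/-- A finite set of tree classes containing all classes with at most `n+1`
vertices. -/
noncomputable def treeCand (n : ℕ) : Finset TreeClass :=
  ((forestsUpTo n).map fun F => clT (RTree.node F)).toFinset

/-- The Hall product on basis elements: `δ_A × δ_B = Σ_M n(A,B;M)·δ_M`
(every `M` with `n(A,B;M) ≠ 0` has exactly `sizeC A + sizeC B` vertices). -/
noncomputable def mulBasis (A B : ForestClass) : H :=
  ∑ M ∈ forestCand (sizeC A + sizeC B), (nCuts A B M : ℚ) • delta M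

/-- The Hall product on `H`, extended bilinearly from basis elements. -/
noncomputable def hmul (f g : H) : H :=
  f.sum fun A a => g.sum fun B b => (a * b) • mulBasis A B

/-- The Connes-Kreimer Lie algebra `n_T` (as a vector space): the span of
isomorphism classes of rooted trees. -/
abbrev nT : Type := TreeClass →₀ ℚ

/-- The basis element of `n_T` corresponding to a rooted tree `T`. -/
noncomputable def tau (T : TreeClass) : nT := Finsupp.single T 1

/-- `a(T₁,T₂;T)`: the number of edges `e` of `T` such that the single-edge cut
at `e` has pruned part `≅ T₁` and root part `≅ T₂`. -/
noncomputable def aCount (T₁ T₂ T : TreeClass) : ℕ :=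
  (cutsF [repT T]).countP fun c =>
    decide (fullsL c = 1 ∧ clF (Pcut [repT T] c) = ({T₁} : Multiset TreeClass)
      ∧ clF (Rcut [repT T] c) = ({T₂} : Multiset TreeClass))

/-- The grafting (pre-Lie) product on basis elements:
`T₁ * T₂ = Σ_T a(T₁,T₂;T)·T`. -/
noncomputable def graftBasis (T₁ T₂ : TreeClass) : nT :=
  ∑ T ∈ treeCand (sizeT T₁ + sizeT T₂), (aCount T₁ T₂ T : ℚ) • tau T

/-- The grafting (pre-Lie) product on `n_T`, extended bilinearly. -/
noncomputable def graft (x y : nT) : nT :=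
  x.sum fun T₁ a => y.sum fun T₂ b => (a * b) • graftBasis T₁ T₂

/-- The Connes-Kreimer bracket `[x,y] = x*y - y*x` on `n_T`. -/
noncomputable def ckBracket (x y : nT) : nT := graft x y - graft y x

/-- `Ẽ_A δ_B = Σ_C δ_{R_C(B)}`, the sum over admissible cuts `C` of `B` with
`P_C(B) ≅ A`. -/
noncomputable def elimBasis (A B : ForestClass) : H :=
  (((cutsF (repF B)).filter fun c => decide (clF (Pcut (repF B) c) = A)).map
    fun c => delta (clF (Rcut (repF B) c))).sum

/-- The elimination operator `E_A` (here on `H ≅ H*`, identifying `φ_B` with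
`δ_B`). -/
noncomputable def elim (A : ForestClass) : H →ₗ[ℚ] H :=
  Finsupp.lsum ℚ fun B => LinearMap.toSpanSingleton ℚ H (elimBasis A B)

/-- `Ẽ^top_A δ_B = Σ_C δ_{P_C(B)}`, the sum over admissible cuts `C` of `B`
with `R_C(B) ≅ A`. -/
noncomputable def topElimBasis (A B : ForestClass) : H :=
  (((cutsF (repF B)).filter fun c => decide (clF (Rcut (repF B) c) = A)).map
    fun c => delta (clF (Pcut (repF B) c))).sum

/-- The top-elimination operator `E^top_A`. -/
noncomputable def topElim (A : ForestClass) : H →ₗ[ℚ] H :=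
  Finsupp.lsum ℚ fun B => LinearMap.toSpanSingleton ℚ H (topElimBasis A B)

/-- `H ⊗ H`, realized as finitely supported functions on pairs of classes. -/
abbrev H2 : Type := (ForestClass × ForestClass) →₀ ℚ

/-- `Δ(δ_M) = Σ δ_A ⊗ δ_B`, the sum over ordered pairs `(A,B)` of classes with
`A ⊔ B ≅ M`. -/
noncomputable def deltaBasis (M : ForestClass) : H2 :=
  ∑ A ∈ M.powerset.toFinset, Finsupp.single (A, M - A) 1

/-- The coproduct `Δ : H → H ⊗ H`. -/
noncomputable def coprod : H →ₗ[ℚ] H2 :=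
  Finsupp.lsum ℚ fun M => LinearMap.toSpanSingleton ℚ H2 (deltaBasis M)

/-- `H ⊗ H ⊗ H`, realized as finitely supported functions on triples. -/
abbrev H3 : Type := (ForestClass × ForestClass × ForestClass) →₀ ℚ

/-- The product on `H ⊗ H` induced by the Hall product:
`(δ_{A₁}⊗δ_{A₂})·(δ_{B₁}⊗δ_{B₂}) = (δ_{A₁}×δ_{B₁}) ⊗ (δ_{A₂}×δ_{B₂})`. -/
noncomputable def mulBasis2 (A B : ForestClass × ForestClass) : H2 :=
  ∑ M ∈ forestCand (sizeC A.1 + sizeC B.1), ∑ N ∈ forestCand (sizeC A.2 + sizeC B.2),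
    ((nCuts A.1 B.1 M : ℚ) * (nCuts A.2 B.2 N : ℚ)) • Finsupp.single (M, N) 1

/-- The induced product on `H ⊗ H`, extended bilinearly. -/
noncomputable def hmul2 (f g : H2) : H2 :=
  f.sum fun A a => g.sum fun B b => (a * b) • mulBasis2 A B

/-- `Δ ⊗ id : H ⊗ H → H ⊗ H ⊗ H`. -/
noncomputable def coprodFst : H2 →ₗ[ℚ] H3 :=
  Finsupp.lsum ℚ fun p => LinearMap.toSpanSingleton ℚ H3
    (∑ A ∈ p.1.powerset.toFinset, Finsupp.single (A, p.1 - A, p.2) 1)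

/-- `id ⊗ Δ : H ⊗ H → H ⊗ H ⊗ H`. -/
noncomputable def coprodSnd : H2 →ₗ[ℚ] H3 :=
  Finsupp.lsum ℚ fun p => LinearMap.toSpanSingleton ℚ H3
    (∑ A ∈ p.2.powerset.toFinset, Finsupp.single (p.1, A, p.2 - A) 1)

/-- `ε ⊗ id : H ⊗ H → H`. -/
noncomputable def counitFst : H2 →ₗ[ℚ] H :=
  Finsupp.lsum ℚ fun p => LinearMap.toSpanSingleton ℚ H
    (if p.1 = 0 then delta p.2 else 0)

/-- `id ⊗ ε : H ⊗ H → H`. -/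
noncomputable def counitSnd : H2 →ₗ[ℚ] H :=
  Finsupp.lsum ℚ fun p => LinearMap.toSpanSingleton ℚ H
    (if p.2 = 0 then delta p.1 else 0)

/-- The counit `ε : H → ℚ`, `ε(δ_∅) = 1` and `ε(δ_M) = 0` for `M ≇ ∅`
(evaluation at the class of the empty forest). -/
noncomputable def eps : H →ₗ[ℚ] ℚ := Finsupp.lapply 0
/-! ### Auxiliary development -/

section Aux

open List

lemma sizeL_nil : sizeL [] = 0 := by simp [sizeL]

lemma sizeL_node (l : List RTree) : sizeL [RTree.node l] = 1 + sizeL l := by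
  simp [sizeL]

lemma sizeL_cons (t : RTree) (ts : List RTree) : sizeL (t :: ts) = sizeL [t] + sizeL ts := by
  cases t with | node l => simp [sizeL]

lemma sizeL_append : ∀ (F G : List RTree), sizeL (F ++ G) = sizeL F + sizeL G := by
  intro F G
  induction F with
  | nil => simp [sizeL]
  | cons t ts ih =>
      rw [List.cons_append, sizeL_cons t (ts ++ G), sizeL_cons t ts, ih]; omega

lemma mem_sizeL_le {t : RTree} {F : List RTree} (h : t ∈ F) : sizeL [t] ≤ sizeL F := by
  induction F with
  | nil => cases h
  | cons s ts ih =>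
      rcases List.mem_cons.mp h with rfl | h'
      · conv_rhs => rw [sizeL_cons]
        omega
      · have := ih h'
        conv_rhs => rw [sizeL_cons]
        omega

lemma clF_nil : clF [] = 0 := rfl

lemma clF_cons (t : RTree) (F : List RTree) : clF (t :: F) = clT t ::ₘ clF F := by
  simp [clF, clT]

lemma clF_append (F G : List RTree) : clF (F ++ G) = clF F + clF G := by
  simp [clF]

lemma clF_singleton (t : RTree) : clF [t] = {clT t} := by
  simp [clF]

lemma map_eq_of_forall₂ {l₁ l₂ : List RTree}
    (h : List.Forall₂ (fun a b => clT a = clT b) l₁ l₂) : l₁.map clT = l₂.map clT := by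
  induction h with
  | nil => rfl
  | cons h _ ih => simp [h, ih]

lemma iso_refl_aux : ∀ n, ∀ t : RTree, sizeL [t] ≤ n → Iso t t := by
  intro n
  induction n using Nat.strong_induction_on with
  | _ n ih =>
    intro t ht
    cases t with
    | node l =>
      refine Iso.node (List.forall₂_same.mpr fun x hx => ih (sizeL [x]) ?_ x le_rfl)
        (List.Perm.refl l)
      have h1 := mem_sizeL_le hx
      have h2 := sizeL_node l
      omega

lemma iso_refl (t : RTree) : Iso t t := iso_refl_aux _ t le_rfl

lemma forall₂_iso_flip : ∀ (a b : List RTree), List.Forall₂ Iso a b →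
    (∀ x ∈ a, ∀ y, Iso x y → Iso y x) → List.Forall₂ Iso b a := by
  intro a b h
  induction h with
  | nil => exact fun _ => .nil
  | @cons x y a' b' hab h ih =>
      intro hsym
      exact .cons (hsym x (by simp) y hab) (ih fun z hz => hsym z (by simp [hz]))

lemma forall₂_iso_comp : ∀ (a b : List RTree), List.Forall₂ Iso a b → ∀ c,
    (∀ x ∈ a, ∀ y z, Iso x y → Iso y z → Iso x z) →
    List.Forall₂ Iso b c → List.Forall₂ Iso a c := by
  intro a b h1
  induction h1 with
  | nil => intro c _ h2; cases h2; exact .nil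
  | @cons x y a' b' hxy h ih =>
      intro c htrans h2
      cases h2 with
      | cons hyz h2' =>
          exact .cons (htrans x (by simp) _ _ hxy hyz)
            (ih _ (fun z hz => htrans z (by simp [hz])) h2')

lemma iso_symm_aux : ∀ n, ∀ t u : RTree, sizeL [t] ≤ n → Iso t u → Iso u t := by
  intro n
  induction n using Nat.strong_induction_on with
  | _ n ih =>
    intro t u ht h
    cases h with
    | @node l₁ l l₂ hf hp =>
      have hsym : ∀ x ∈ l₁, ∀ y, Iso x y → Iso y x := by
        intro x hx y hxy
        have h1 := mem_sizeL_le hx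
        have h2 := sizeL_node l₁
        exact ih (sizeL [x]) (by omega) x y le_rfl hxy
      have hflip := forall₂_iso_flip _ _ hf hsym
      obtain ⟨w, hw1, hw2⟩ := List.perm_comp_forall₂ hp.symm hflip
      exact Iso.node hw1 hw2

lemma iso_trans_aux : ∀ n, ∀ t u v : RTree, sizeL [t] ≤ n → Iso t u → Iso u v → Iso t v := by
  intro n
  induction n using Nat.strong_induction_on with
  | _ n ih =>
    intro t u v ht h1 h2
    cases h1 with
    | @node l₁ l l₂ hf1 hp1 =>
      cases h2 with
      | @node _ m l₃ hf2 hp2 =>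
        obtain ⟨w, hw1, hw2⟩ := List.perm_comp_forall₂ hp1 hf2
        have htrans : ∀ x ∈ l₁, ∀ y z, Iso x y → Iso y z → Iso x z := by
          intro x hx y z hxy hyz
          have h1 := mem_sizeL_le hx
          have h2 := sizeL_node l₁
          exact ih (sizeL [x]) (by omega) x y z le_rfl hxy hyz
        exact Iso.node (forall₂_iso_comp _ _ hf1 _ htrans hw1) (hw2.trans hp2)

lemma iso_equiv : Equivalence Iso :=
  ⟨iso_refl, fun h => iso_symm_aux _ _ _ le_rfl h, fun h1 h2 => iso_trans_aux _ _ _ _ le_rfl h1 h2⟩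

lemma clT_eq_iff {t u : RTree} : clT t = clT u ↔ Iso t u := by
  rw [clT, clT, Quot.eq]
  exact iso_equiv.eqvGen_iff

lemma exists_forall₂_of_clF_eq {F G : List RTree} (h : clF F = clF G) :
    ∃ G', List.Forall₂ (fun a b => clT a = clT b) F G' ∧ G'.Perm G := by
  have hp : (F.map clT).Perm (G.map clT) := Multiset.coe_eq_coe.mp h
  have h2 : List.Forall₂ (fun (x : TreeClass) b => x = clT b) (G.map clT) G :=
    List.forall₂_map_left_iff.mpr (List.forall₂_same.mpr fun _ _ => rfl)
  obtain ⟨w, hw1, hw2⟩ := List.perm_comp_forall₂ hp h2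
  exact ⟨w, List.forall₂_map_left_iff.mp hw1, hw2⟩

lemma node_iso_of_clF_eq {F G : List RTree} (h : clF F = clF G) :
    Iso (.node F) (.node G) := by
  obtain ⟨G', h1, h2⟩ := exists_forall₂_of_clF_eq h
  exact Iso.node (h1.imp fun {a b} h => clT_eq_iff.mp h) h2

lemma clF_eq_of_iso_node {F G : List RTree} (h : Iso (.node F) (.node G)) :
    clF F = clF G := by
  cases h with
  | @node _ l _ hf hp =>
    have h1 : (F.map clT) = l.map clT :=
      map_eq_of_forall₂ (hf.imp fun {a b} h => clT_eq_iff.mpr h)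
    have h2 : (l.map clT).Perm (G.map clT) := hp.map clT
    show ((F.map clT : List TreeClass) : Multiset TreeClass) = (G.map clT : List TreeClass)
    rw [h1]
    exact Multiset.coe_eq_coe.mpr h2

lemma sizeL_eq_sum : ∀ F : List RTree, sizeL F = (F.map fun t => sizeL [t]).sum := by
  intro F
  induction F with
  | nil => simp [sizeL]
  | cons t ts ih => rw [sizeL_cons t ts, ih]; simp

lemma sizeL_perm {F G : List RTree} (h : F.Perm G) : sizeL F = sizeL G := by
  rw [sizeL_eq_sum, sizeL_eq_sum]
  exact (h.map _).sum_eq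

lemma sizeL_eq_of_forall₂ : ∀ (a b : List RTree), List.Forall₂ Iso a b →
    (∀ x ∈ a, ∀ y, Iso x y → sizeL [x] = sizeL [y]) → sizeL a = sizeL b := by
  intro a b h
  induction h with
  | nil => exact fun _ => rfl
  | @cons x y a' b' hxy h ih =>
      intro hs
      rw [sizeL_cons x a', sizeL_cons y b', hs x (by simp) y hxy,
        ih fun z hz => hs z (by simp [hz])]

lemma size_iso_aux : ∀ n, ∀ t u : RTree, sizeL [t] ≤ n → Iso t u → sizeL [t] = sizeL [u] := by
  intro n
  induction n using Nat.strong_induction_on with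
  | _ n ih =>
    intro t u ht h
    cases h with
    | @node l₁ l l₂ hf hp =>
      have hsz : sizeL l₁ = sizeL l := by
        refine sizeL_eq_of_forall₂ _ _ hf ?_
        intro x hx y hxy
        have h1 := mem_sizeL_le hx
        have h2 := sizeL_node l₁
        exact ih (sizeL [x]) (by omega) x y le_rfl hxy
      have h3 := sizeL_node l₁
      have h4 := sizeL_node l₂
      have h5 := sizeL_perm hp
      omega

noncomputable def sizeQ : TreeClass → ℕ :=
  Quot.lift (fun t => sizeL [t]) fun a b h => size_iso_aux _ a b le_rfl h

lemma sizeQ_clT (t : RTree) : sizeQ (clT t) = sizeL [t] := rfl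

lemma sizeL_eq_clF_sum : ∀ F : List RTree, sizeL F = ((clF F).map sizeQ).sum := by
  intro F
  induction F with
  | nil => simp [sizeL, clF]
  | cons t ts ih => rw [sizeL_cons t ts, clF_cons, Multiset.map_cons, Multiset.sum_cons, ih, sizeQ_clT]

lemma sizeL_congr {F G : List RTree} (h : clF F = clF G) : sizeL F = sizeL G := by
  rw [sizeL_eq_clF_sum, sizeL_eq_clF_sum, h]

lemma clF_repF (M : ForestClass) : clF (repF M) = M := by
  show ((((M.toList.map Quot.out)).map clT : List TreeClass) : Multiset TreeClass) = M
  rw [List.map_map]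
  have : (clT ∘ Quot.out : TreeClass → TreeClass) = id := by
    funext q
    exact Quot.out_eq q
  rw [this, List.map_id]
  exact Multiset.coe_toList M

lemma sizeC_eq (M : ForestClass) : sizeC M = (M.map sizeQ).sum := by
  rw [sizeC, sizeL_eq_clF_sum, clF_repF]

lemma sizeC_clF (F : List RTree) : sizeC (clF F) = sizeL F := by
  rw [sizeC]
  exact sizeL_congr (clF_repF _)

lemma sizeC_add (S T : ForestClass) : sizeC (S + T) = sizeC S + sizeC T := by
  simp [sizeC_eq]

end Aux
section Cuts

open List

lemma cutsF_nil : cutsF [] = [[]] := by rw [cutsF]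

lemma cutsF_cons (l ts) : cutsF (RTree.node l :: ts) =
    (CutShape.full :: (cutsF l).map CutShape.branch).flatMap
      fun c => (cutsF ts).map (c :: ·) := by rw [cutsF]

lemma Pcut_nil (c) : Pcut [] c = [] := by rw [Pcut]

lemma Pcut_full (l ts cs) : Pcut (.node l :: ts) (.full :: cs) = .node l :: Pcut ts cs := by
  rw [Pcut]

lemma Pcut_branch (l ts ds cs) :
    Pcut (.node l :: ts) (.branch ds :: cs) = Pcut l ds ++ Pcut ts cs := by rw [Pcut]

lemma Rcut_nil (c) : Rcut [] c = [] := by rw [Rcut]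

lemma Rcut_full (l ts cs) : Rcut (.node l :: ts) (.full :: cs) = Rcut ts cs := by rw [Rcut]

lemma Rcut_branch (l ts ds cs) :
    Rcut (.node l :: ts) (.branch ds :: cs) = .node (Rcut l ds) :: Rcut ts cs := by rw [Rcut]

lemma cuts_size : ∀ n (F : List RTree), sizeL F ≤ n →
    ∀ c ∈ cutsF F, sizeL (Pcut F c) + sizeL (Rcut F c) = sizeL F := by
  intro n
  induction n using Nat.strong_induction_on with
  | _ n ih =>
    intro F hF c hc
    cases F with
    | nil =>
        rw [cutsF_nil] at hc
        simp only [List.mem_singleton] at hc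
        subst hc
        rw [Pcut_nil, Rcut_nil, sizeL_nil]
    | cons t ts =>
      cases t with
      | node l =>
        rw [cutsF_cons] at hc
        simp only [List.mem_flatMap, List.mem_map, List.mem_cons] at hc
        obtain ⟨d, hd, cs, hcs, rfl⟩ := hc
        have hlts : sizeL (RTree.node l :: ts) = 1 + sizeL l + sizeL ts := by simp [sizeL]
        rcases hd with rfl | ⟨ds, hds, rfl⟩
        · rw [Pcut_full, Rcut_full, sizeL_cons, sizeL_node]
          have hts := ih (sizeL ts) (by omega) ts le_rfl cs hcs
          omega
        · rw [Pcut_branch, Rcut_branch, sizeL_append, sizeL_cons, sizeL_node]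
          have hts := ih (sizeL ts) (by omega) ts le_rfl cs hcs
          have hl := ih (sizeL l) (by omega) l le_rfl ds hds
          omega

/-- The generating function of cuts of a forest, in the monoid algebra on
pairs (pruned class, root class). -/
noncomputable def phi (F : List RTree) : AddMonoidAlgebra ℚ (ForestClass × ForestClass) :=
  ((cutsF F).map fun c => AddMonoidAlgebra.single (clF (Pcut F c), clF (Rcut F c)) (1:ℚ)).sum

lemma sum_flatMap' {α M : Type*} [AddCommMonoid M] (L : List α) (f : α → List M) :
    (L.flatMap f).sum = (L.map fun a => (f a).sum).sum := by
  induction L with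
  | nil => simp
  | cons a L ih => simp [List.flatMap_cons, List.sum_append, ih]

lemma list_sum_mul {M : Type*} [NonUnitalNonAssocSemiring M] :
    ∀ (L : List M) (x : M), L.sum * x = (L.map (· * x)).sum := by
  intro L x
  induction L with
  | nil => simp
  | cons a L ih => simp [add_mul, ih]

lemma list_mul_sum {M : Type*} [NonUnitalNonAssocSemiring M] :
    ∀ (L : List M) (x : M), x * L.sum = (L.map (x * ·)).sum := by
  intro L x
  induction L with
  | nil => simp
  | cons a L ih => simp [mul_add, ih]

lemma phi_nil : phi [] = 1 := by
  rw [phi, cutsF_nil]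
  simp [Pcut_nil, Rcut_nil, clF_nil, AddMonoidAlgebra.one_def]
  rfl

lemma flatMap_single {α β : Type*} (L : List α) (g : α → β) :
    (L.flatMap fun c => [g c]) = L.map g := by
  induction L <;> simp_all

lemma cutsF_singleton (l : List RTree) :
    cutsF [RTree.node l] = (CutShape.full :: (cutsF l).map CutShape.branch).map (fun c => [c]) := by
  rw [cutsF_cons, cutsF_nil]
  exact flatMap_single _ _

lemma phi_cons (t : RTree) (ts : List RTree) : phi (t :: ts) = phi [t] * phi ts := by
  cases t with
  | node l =>
    rw [phi, cutsF_cons, List.map_flatMap, sum_flatMap']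
    rw [phi, cutsF_singleton, List.map_map, phi, list_sum_mul, List.map_map]
    refine congrArg List.sum (List.map_congr_left ?_)
    intro c _
    rw [Function.comp_apply, Function.comp_apply, list_mul_sum, List.map_map, List.map_map]
    refine congrArg List.sum (List.map_congr_left ?_)
    intro cs _
    cases c <;>
      simp only [Function.comp_apply, Pcut_full, Rcut_full, Pcut_branch, Rcut_branch,
        Pcut_nil, Rcut_nil, AddMonoidAlgebra.single_mul_single, clF_cons, clF_nil,
        clF_append, List.append_nil, Prod.mk_add_mk, Multiset.cons_zero,
        Multiset.singleton_add, mul_one, zero_add, add_zero]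

lemma phi_append : ∀ F G : List RTree, phi (F ++ G) = phi F * phi G := by
  intro F G
  induction F with
  | nil => rw [List.nil_append, phi_nil, one_mul]
  | cons t F' ih => rw [List.cons_append, phi_cons t (F' ++ G), ih, phi_cons t F', mul_assoc]

lemma phi_eq_prod : ∀ F : List RTree, phi F = (F.map fun t => phi [t]).prod := by
  intro F
  induction F with
  | nil => rw [phi_nil]; rfl
  | cons t F' ih => rw [phi_cons, ih, List.map_cons, List.prod_cons]

lemma phi_perm {F G : List RTree} (h : F.Perm G) : phi F = phi G := by
  rw [phi_eq_prod, phi_eq_prod]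
  exact (h.map _).prod_eq

/-- `wrapC M` : the class of the tree obtained by grafting the forest `M`
onto a new root. -/
noncomputable def wrapC (M : ForestClass) : TreeClass := clT (.node (repF M))

lemma wrapC_clF (R : List RTree) : wrapC (clF R) = clT (.node R) :=
  clT_eq_iff.mpr (node_iso_of_clF_eq (clF_repF (clF R)))

noncomputable def wrapMap :
    AddMonoidAlgebra ℚ (ForestClass × ForestClass) →+
      AddMonoidAlgebra ℚ (ForestClass × ForestClass) :=
  { toFun := AddMonoidAlgebra.mapDomain
      (fun p : ForestClass × ForestClass => (p.1, ({wrapC p.2} : Multiset TreeClass)))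
    map_zero' := AddMonoidAlgebra.mapDomain_zero _
    map_add' := AddMonoidAlgebra.mapDomain_add _ }

lemma wrapMap_single (p : ForestClass × ForestClass) (r : ℚ) :
    wrapMap (AddMonoidAlgebra.single p r) =
      AddMonoidAlgebra.single (p.1, ({wrapC p.2} : Multiset TreeClass)) r := by
  show AddMonoidAlgebra.mapDomain _ (AddMonoidAlgebra.single p r) = _
  rw [AddMonoidAlgebra.mapDomain_single]

lemma phi_singleton_node (l : List RTree) :
    phi [RTree.node l] = AddMonoidAlgebra.single (clF [RTree.node l], 0) 1 + wrapMap (phi l) := by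
  rw [phi, cutsF_singleton, List.map_map, List.map_cons, List.sum_cons]
  congr 1
  · rw [Function.comp_apply, Pcut_full, Rcut_full, Pcut_nil, Rcut_nil, clF_nil]
  · rw [phi, map_list_sum wrapMap, List.map_map, List.map_map]
    refine congrArg List.sum (List.map_congr_left ?_)
    intro ds _
    simp only [Function.comp_apply]
    rw [wrapMap_single, wrapC_clF]
    simp only [Pcut_branch, Rcut_branch, Pcut_nil, Rcut_nil,
      List.append_nil, clF_cons, clF_nil, Multiset.cons_zero]

lemma phi_congr_aux : ∀ n (F G : List RTree), sizeL F ≤ n → clF F = clF G → phi F = phi G := by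
  intro n
  induction n using Nat.strong_induction_on with
  | _ n ih =>
    intro F G hF h
    obtain ⟨G', hfa, hperm⟩ := exists_forall₂_of_clF_eq h
    rw [← phi_perm hperm, phi_eq_prod F, phi_eq_prod G']
    congr 1
    have key : ∀ x ∈ F, ∀ y : RTree, clT x = clT y → phi [x] = phi [y] := by
      intro x hx y hxy
      cases x with
      | node l₁ =>
        cases y with
        | node l₂ =>
          have hiso := clT_eq_iff.mp hxy
          have hcl : clF l₁ = clF l₂ := clF_eq_of_iso_node hiso
          have h1 := mem_sizeL_le hx
          have h2 := sizeL_node l₁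
          have hphi : phi l₁ = phi l₂ := ih (sizeL l₁) (by omega) l₁ l₂ le_rfl hcl
          rw [phi_singleton_node, phi_singleton_node, hphi, clF_singleton, clF_singleton, hxy]
    clear h hperm hF
    induction hfa with
    | nil => rfl
    | @cons x y F₂ G₂ hxy hrest ihl =>
        rw [List.map_cons, List.map_cons, key x (by simp) y hxy,
          ihl (fun z hz => key z (by simp [hz]))]

lemma phi_congr {F G : List RTree} (h : clF F = clF G) : phi F = phi G :=
  phi_congr_aux _ F G le_rfl h

lemma list_single_sum_apply {α : Type*} (L : List α) (f : α → ForestClass × ForestClass)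
    (x : ForestClass × ForestClass) :
    ((L.map fun c => AddMonoidAlgebra.single (f c) (1:ℚ)).sum : AddMonoidAlgebra ℚ _).coeff x
      = (L.countP fun c => decide (f c = x) : ℕ) := by
  induction L with
  | nil => simp
  | cons a L ih =>
      rw [List.map_cons, List.sum_cons, AddMonoidAlgebra.coeff_add, Finsupp.add_apply, ih,
        List.countP_cons]
      rw [AddMonoidAlgebra.coeff_single, Finsupp.single_apply]
      push_cast
      by_cases h : f a = x <;> simp [h] <;> ring

lemma phi_apply (F : List RTree) (x : ForestClass × ForestClass) :
    (phi F).coeff x = ((cutsF F).countP fun c =>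
      decide ((clF (Pcut F c), clF (Rcut F c)) = x) : ℕ) := by
  rw [phi, list_single_sum_apply]

lemma nCuts_eq_phi (A B M : ForestClass) : (nCuts A B M : ℚ) = (phi (repF M)).coeff (A, B) := by
  rw [nCuts, phi_apply]
  congr 1
  refine List.countP_congr ?_
  intro c _
  simp only [decide_eq_true_eq, Prod.mk.injEq]

lemma phi_ne_size {F : List RTree} {x : ForestClass × ForestClass} (h : (phi F).coeff x ≠ 0) :
    sizeC x.1 + sizeC x.2 = sizeL F := by
  rw [phi_apply] at h
  have hpos : 0 < (cutsF F).countP fun c => decide ((clF (Pcut F c), clF (Rcut F c)) = x) := by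
    rcases Nat.eq_zero_or_pos ((cutsF F).countP _) with h0 | h0
    · exact absurd (by rw [h0]; norm_num) h
    · exact h0
  obtain ⟨c, hc, hpc⟩ := List.countP_pos_iff.mp hpos
  have := of_decide_eq_true hpc
  rw [← this]
  show sizeC (clF _) + sizeC (clF _) = _
  rw [sizeC_clF, sizeC_clF]
  exact cuts_size (sizeL F) F le_rfl c hc

/-- Generating function of cuts of a forest class. -/
noncomputable def Phi (M : ForestClass) : AddMonoidAlgebra ℚ (ForestClass × ForestClass) :=
  phi (repF M)

lemma Phi_mul (S T : ForestClass) : Phi (S + T) = Phi S * Phi T := by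
  rw [Phi, Phi, Phi, ← phi_append]
  refine phi_congr ?_
  rw [clF_append, clF_repF, clF_repF, clF_repF]

lemma Phi_apply_size {M : ForestClass} {x : ForestClass × ForestClass} (h : (Phi M).coeff x ≠ 0) :
    sizeC x.1 + sizeC x.2 = sizeC M := phi_ne_size h

lemma nCuts_eq_Phi (A B M : ForestClass) : (nCuts A B M : ℚ) = (Phi M).coeff (A, B) :=
  nCuts_eq_phi A B M

lemma forestsUpTo_complete : ∀ n (F : List RTree), sizeL F ≤ n →
    ∃ F' ∈ forestsUpTo n, clF F' = clF F := by
  intro n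
  induction n with
  | zero =>
      intro F h
      cases F with
      | nil => exact ⟨[], by simp [forestsUpTo], rfl⟩
      | cons t ts =>
          exfalso
          rw [sizeL_cons] at h
          cases t with
          | node l => rw [sizeL_node] at h; omega
  | succ n ih =>
      intro F h
      cases F with
      | nil => exact ⟨[], by simp [forestsUpTo], rfl⟩
      | cons t ts =>
        cases t with
        | node l =>
          have h1 : sizeL (RTree.node l :: ts) = 1 + sizeL l + sizeL ts := by simp [sizeL]
          obtain ⟨l', hl', hcl⟩ := ih l (by omega)
          obtain ⟨ts', hts', hcts⟩ := ih ts (by omega)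
          refine ⟨.node l' :: ts', ?_, ?_⟩
          · show _ ∈ forestsUpTo (n+1)
            rw [forestsUpTo]
            simp only [List.mem_cons, List.mem_flatMap, List.mem_map]
            exact Or.inr ⟨l', hl', ts', hts', rfl⟩
          · rw [clF_cons, clF_cons, hcts]
            congr 1
            exact clT_eq_iff.mpr (node_iso_of_clF_eq hcl)

lemma mem_forestCand {M : ForestClass} {n : ℕ} (h : sizeC M ≤ n) : M ∈ forestCand n := by
  obtain ⟨F', hmem, hcl⟩ := forestsUpTo_complete n (repF M) h
  rw [forestCand, List.mem_toFinset, List.mem_map]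
  exact ⟨F', hmem, by rw [hcl, clF_repF]⟩

lemma sizeC_zero : sizeC 0 = 0 := by simp [sizeC_eq]

lemma zero_mem_forestCand (n : ℕ) : (0 : ForestClass) ∈ forestCand n :=
  mem_forestCand (by rw [sizeC_zero]; omega)

lemma repF_zero : repF (0 : ForestClass) = [] := by
  rw [repF]
  simp

lemma nCuts_zero (A B : ForestClass) :
    (nCuts A B 0 : ℚ) = if A = 0 ∧ B = 0 then 1 else 0 := by
  rw [nCuts, repF_zero, cutsF_nil]
  rw [List.countP_cons, List.countP_nil, Pcut_nil, Rcut_nil, clF_nil]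
  by_cases hA : A = 0 <;> by_cases hB : B = 0 <;>
    simp [hA, hB, eq_comm]

end Cuts
section FinsuppLayer

lemma mem_pows {A M : ForestClass} : A ∈ M.powerset.toFinset ↔ A ≤ M := by
  rw [Multiset.mem_toFinset, Multiset.mem_powerset]

lemma deltaBasis_apply (M S T : ForestClass) :
    deltaBasis M (S, T) = if M = S + T then 1 else 0 := by
  rw [deltaBasis, Finsupp.finset_sum_apply]
  have h1 : ∀ A ∈ M.powerset.toFinset,
      (Finsupp.single (A, M - A) (1:ℚ)) (S, T) =
        if A = S then (if M - S = T then (1:ℚ) else 0) else 0 := by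
    intro A _
    rw [Finsupp.single_apply]
    by_cases h1 : A = S
    · subst h1
      by_cases h2 : M - A = T <;> simp [h2, Prod.ext_iff]
    · simp [Prod.ext_iff, h1]
  rw [Finset.sum_congr rfl h1, Finset.sum_ite_eq' M.powerset.toFinset S]
  by_cases hS : S ≤ M
  · by_cases hT : M - S = T
    · have hM : M = S + T := by rw [← hT]; exact (add_tsub_cancel_of_le hS).symm
      simp [mem_pows, hS, hT, hM]
    · have hM : ¬ M = S + T := by
        intro h; exact hT (by rw [h, add_tsub_cancel_left])
      simp [mem_pows, hS, hT, hM]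
  · have hM : ¬ M = S + T := fun h => hS (h ▸ le_self_add)
    simp [mem_pows, hS, hM]

lemma coprod_single (M : ForestClass) (a : ℚ) :
    coprod (Finsupp.single M a) = a • deltaBasis M := by
  rw [coprod, Finsupp.lsum_single, LinearMap.toSpanSingleton_apply]

lemma coprod_delta (M : ForestClass) : coprod (delta M) = deltaBasis M := by
  rw [delta, coprod_single, one_smul]

section Bil

variable {ι κ σ : Type*} {V : Type*} [AddCommMonoid V] [Module ℚ V]

/-- Generic bilinear extension from a basis-valued table. -/
noncomputable def bilV (Φ : ι → κ → V) (f : ι →₀ ℚ) (g : κ →₀ ℚ) : V :=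
  f.sum fun A a => g.sum fun B b => (a * b) • Φ A B

lemma bilV_zero_left (Φ : ι → κ → V) (g : κ →₀ ℚ) : bilV Φ 0 g = 0 := by
  simp [bilV]

lemma bilV_zero_right (Φ : ι → κ → V) (f : ι →₀ ℚ) : bilV Φ f 0 = 0 := by
  simp [bilV]

lemma bilV_single_single (Φ : ι → κ → V) (A : ι) (B : κ) (a b : ℚ) :
    bilV Φ (Finsupp.single A a) (Finsupp.single B b) = (a * b) • Φ A B := by
  rw [bilV, Finsupp.sum_single_index (by simp [Finsupp.sum]),
    Finsupp.sum_single_index (by simp)]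

lemma bilV_add_left (Φ : ι → κ → V) (f f' : ι →₀ ℚ) (g : κ →₀ ℚ) :
    bilV Φ (f + f') g = bilV Φ f g + bilV Φ f' g := by
  rw [bilV, bilV, bilV, Finsupp.sum_add_index]
  · intro A _
    simp [Finsupp.sum]
  · intro A _ b₁ b₂
    rw [← Finsupp.sum_add]
    refine Finsupp.sum_congr fun B _ => ?_
    rw [add_mul, add_smul]

lemma bilV_add_right (Φ : ι → κ → V) (f : ι →₀ ℚ) (g g' : κ →₀ ℚ) :
    bilV Φ f (g + g') = bilV Φ f g + bilV Φ f g' := by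
  rw [bilV, bilV, bilV, ← Finsupp.sum_add]
  refine Finsupp.sum_congr fun A _ => ?_
  rw [Finsupp.sum_add_index (by intro B _; simp) (by intro B _ b₁ b₂; rw [mul_add, add_smul])]

lemma bilV_smul_left (Φ : ι → κ → V) (c : ℚ) (f : ι →₀ ℚ) (g : κ →₀ ℚ) :
    bilV Φ (c • f) g = c • bilV Φ f g := by
  rw [bilV, bilV, Finsupp.sum_smul_index (by intro A; simp [Finsupp.sum]), Finsupp.smul_sum]
  refine Finsupp.sum_congr fun A a => ?_
  rw [Finsupp.smul_sum]
  refine Finsupp.sum_congr fun B b => ?_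
  rw [mul_assoc, mul_smul]

lemma bilV_smul_right (Φ : ι → κ → V) (c : ℚ) (f : ι →₀ ℚ) (g : κ →₀ ℚ) :
    bilV Φ f (c • g) = c • bilV Φ f g := by
  rw [bilV, bilV, Finsupp.smul_sum]
  refine Finsupp.sum_congr fun A a => ?_
  rw [Finsupp.sum_smul_index (by intro B; simp), Finsupp.smul_sum]
  refine Finsupp.sum_congr fun B b => ?_
  rw [smul_smul, mul_left_comm]

lemma bilV_finset_sum_left (Φ : ι → κ → V) (s : Finset σ) (h : σ → ι →₀ ℚ) (g : κ →₀ ℚ) :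
    bilV Φ (∑ i ∈ s, h i) g = ∑ i ∈ s, bilV Φ (h i) g := by
  classical
  induction s using Finset.induction_on with
  | empty => simp [bilV_zero_left]
  | insert _ _ hnot ih =>
      rw [Finset.sum_insert hnot, bilV_add_left, ih, Finset.sum_insert hnot]

lemma bilV_finset_sum_right (Φ : ι → κ → V) (f : ι →₀ ℚ) (s : Finset σ) (h : σ → κ →₀ ℚ) :
    bilV Φ f (∑ i ∈ s, h i) = ∑ i ∈ s, bilV Φ f (h i) := by
  classical
  induction s using Finset.induction_on with
  | empty => simp [bilV_zero_right]
  | insert _ _ hnot ih =>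
      rw [Finset.sum_insert hnot, bilV_add_right, ih, Finset.sum_insert hnot]

end Bil

lemma hmul_eq (f g : H) : hmul f g = bilV mulBasis f g := rfl

lemma hmul2_eq (f g : H2) : hmul2 f g = bilV mulBasis2 f g := rfl

lemma Phi_zero_of_not_mem {A B S : ForestClass}
    (h : S ∉ forestCand (sizeC A + sizeC B)) : (Phi S).coeff (A, B) = 0 := by
  by_contra h0
  have hsz := Phi_apply_size h0
  exact h (mem_forestCand (le_of_eq hsz.symm))

lemma mulBasis2_apply (P Q : ForestClass × ForestClass) (S T : ForestClass) :
    mulBasis2 P Q (S, T) = (Phi S).coeff (P.1, Q.1) * (Phi T).coeff (P.2, Q.2) := by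
  rw [mulBasis2]
  rw [Finsupp.finset_sum_apply]
  have h1 : ∀ M ∈ forestCand (sizeC P.1 + sizeC Q.1),
      (∑ N ∈ forestCand (sizeC P.2 + sizeC Q.2),
        ((nCuts P.1 Q.1 M : ℚ) * (nCuts P.2 Q.2 N : ℚ)) • Finsupp.single (M, N) 1) (S, T)
      = if M = S then (∑ N ∈ forestCand (sizeC P.2 + sizeC Q.2),
          if N = T then (nCuts P.1 Q.1 M : ℚ) * (nCuts P.2 Q.2 N : ℚ) else 0) else 0 := by
    intro M _
    rw [Finsupp.finset_sum_apply]
    by_cases h1 : M = S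
    · subst h1
      rw [if_pos rfl]
      refine Finset.sum_congr rfl fun N _ => ?_
      rw [Finsupp.smul_apply, Finsupp.single_apply]
      by_cases h2 : N = T <;> simp [h2, Prod.ext_iff]
    · rw [if_neg h1]
      refine Finset.sum_eq_zero fun N _ => ?_
      rw [Finsupp.smul_apply, Finsupp.single_apply, if_neg (by simp [Prod.ext_iff, h1]), smul_zero]
  rw [Finset.sum_congr rfl h1, Finset.sum_ite_eq' _ S]
  by_cases hS : S ∈ forestCand (sizeC P.1 + sizeC Q.1)
  · rw [if_pos hS, Finset.sum_ite_eq' _ T]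
    by_cases hT : T ∈ forestCand (sizeC P.2 + sizeC Q.2)
    · rw [if_pos hT, nCuts_eq_Phi, nCuts_eq_Phi]
    · rw [if_neg hT, Phi_zero_of_not_mem hT, mul_zero]
  · rw [if_neg hS, Phi_zero_of_not_mem hS, zero_mul]

lemma core_identity (A B : ForestClass) :
    (∑ M ∈ forestCand (sizeC A + sizeC B), (nCuts A B M : ℚ) • deltaBasis M)
      = ∑ A₁ ∈ A.powerset.toFinset, ∑ B₁ ∈ B.powerset.toFinset,
          mulBasis2 (A₁, A - A₁) (B₁, B - B₁) := by
  ext x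
  obtain ⟨S, T⟩ := x
  have hLHS : (∑ M ∈ forestCand (sizeC A + sizeC B), (nCuts A B M : ℚ) • deltaBasis M) (S, T)
      = (Phi S * Phi T).coeff (A, B) := by
    rw [Finsupp.finset_sum_apply]
    have h1 : ∀ M ∈ forestCand (sizeC A + sizeC B),
        ((nCuts A B M : ℚ) • deltaBasis M) (S, T)
          = if M = S + T then (nCuts A B M : ℚ) else 0 := by
      intro M _
      rw [Finsupp.smul_apply, deltaBasis_apply]
      by_cases h : M = S + T <;> simp [h]
    rw [Finset.sum_congr rfl h1, Finset.sum_ite_eq', ← Phi_mul]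
    by_cases hc : S + T ∈ forestCand (sizeC A + sizeC B)
    · rw [if_pos hc, nCuts_eq_Phi]
    · rw [if_neg hc, Phi_zero_of_not_mem hc]
  rw [hLHS]
  have hRHS : ∀ A₁ ∈ A.powerset.toFinset,
      (∑ B₁ ∈ B.powerset.toFinset, mulBasis2 (A₁, A - A₁) (B₁, B - B₁)) (S, T)
      = ∑ B₁ ∈ B.powerset.toFinset, (Phi S).coeff (A₁, B₁) * (Phi T).coeff (A - A₁, B - B₁) := by
    intro A₁ _
    rw [Finsupp.finset_sum_apply]
    exact Finset.sum_congr rfl fun B₁ _ => mulBasis2_apply _ _ _ _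
  rw [Finsupp.finset_sum_apply, Finset.sum_congr rfl hRHS]
  -- now use the antidiagonal description of multiplication
  classical
  set e : ForestClass × ForestClass → (ForestClass × ForestClass) × (ForestClass × ForestClass) :=
    fun p => ((p.1, p.2), (A - p.1, B - p.2)) with he
  have hs : ∀ {p : (ForestClass × ForestClass) × (ForestClass × ForestClass)},
      p ∈ (A.powerset.toFinset ×ˢ B.powerset.toFinset).image e ↔ p.1 + p.2 = (A, B) := by
    intro p
    constructor
    · intro hp
      obtain ⟨q, hq, rfl⟩ := Finset.mem_image.mp hp
      obtain ⟨hq1, hq2⟩ := Finset.mem_product.mp hq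
      rw [he]
      simp only [Prod.mk_add_mk, Prod.mk.injEq]
      exact ⟨add_tsub_cancel_of_le (mem_pows.mp hq1), add_tsub_cancel_of_le (mem_pows.mp hq2)⟩
    · intro hp
      rw [Prod.ext_iff] at hp
      obtain ⟨hp1, hp2⟩ := hp
      simp only [Prod.fst_add, Prod.snd_add] at hp1 hp2
      refine Finset.mem_image.mpr ⟨(p.1.1, p.1.2), ?_, ?_⟩
      · refine Finset.mem_product.mpr ⟨mem_pows.mpr ?_, mem_pows.mpr ?_⟩
        · exact hp1 ▸ le_self_add
        · exact hp2 ▸ le_self_add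
      · rw [he]
        have h1 : A - p.1.1 = p.2.1 := by rw [← hp1, add_tsub_cancel_left]
        have h2 : B - p.1.2 = p.2.2 := by rw [← hp2, add_tsub_cancel_left]
        simp only [h1, h2]
  rw [AddMonoidAlgebra.mul_apply_antidiagonal (Phi S) (Phi T) (A, B) _ hs]
  have hinj : ∀ x ∈ A.powerset.toFinset ×ˢ B.powerset.toFinset,
      ∀ y ∈ A.powerset.toFinset ×ˢ B.powerset.toFinset, e x = e y → x = y := by
    intro x _ y _ hxy
    have h := congrArg Prod.fst hxy
    simpa [he] using h
  rw [Finset.sum_image hinj, Finset.sum_product]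

end FinsuppLayer
section Assembly

lemma hmul_zero_left (g : H) : hmul 0 g = 0 := by rw [hmul_eq, bilV_zero_left]
lemma hmul_zero_right (f : H) : hmul f 0 = 0 := by rw [hmul_eq, bilV_zero_right]
lemma hmul_add_left (f f' g : H) : hmul (f + f') g = hmul f g + hmul f' g := by
  rw [hmul_eq, bilV_add_left, ← hmul_eq, ← hmul_eq]
lemma hmul_add_right (f g g' : H) : hmul f (g + g') = hmul f g + hmul f g' := by
  rw [hmul_eq, bilV_add_right, ← hmul_eq, ← hmul_eq]
lemma hmul2_zero_left (g : H2) : hmul2 0 g = 0 := by rw [hmul2_eq, bilV_zero_left]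
lemma hmul2_zero_right (f : H2) : hmul2 f 0 = 0 := by rw [hmul2_eq, bilV_zero_right]
lemma hmul2_add_left (f f' g : H2) : hmul2 (f + f') g = hmul2 f g + hmul2 f' g := by
  rw [hmul2_eq, bilV_add_left, ← hmul2_eq, ← hmul2_eq]
lemma hmul2_add_right (f g g' : H2) : hmul2 f (g + g') = hmul2 f g + hmul2 f g' := by
  rw [hmul2_eq, bilV_add_right, ← hmul2_eq, ← hmul2_eq]

lemma coprod_mulBasis (A B : ForestClass) :
    coprod (mulBasis A B)
      = ∑ M ∈ forestCand (sizeC A + sizeC B), (nCuts A B M : ℚ) • deltaBasis M := by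
  rw [mulBasis, map_sum]
  exact Finset.sum_congr rfl fun M _ => by rw [map_smul, coprod_delta]

lemma hmul2_deltaBasis (A B : ForestClass) :
    hmul2 (deltaBasis A) (deltaBasis B)
      = ∑ A₁ ∈ A.powerset.toFinset, ∑ B₁ ∈ B.powerset.toFinset,
          mulBasis2 (A₁, A - A₁) (B₁, B - B₁) := by
  rw [hmul2_eq, deltaBasis, deltaBasis, bilV_finset_sum_left]
  refine Finset.sum_congr rfl fun A₁ _ => ?_
  rw [bilV_finset_sum_right]
  refine Finset.sum_congr rfl fun B₁ _ => ?_
  rw [bilV_single_single, one_mul, one_smul]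

lemma coprod_hmul_single (A B : ForestClass) (a b : ℚ) :
    coprod (hmul (Finsupp.single A a) (Finsupp.single B b))
      = hmul2 (coprod (Finsupp.single A a)) (coprod (Finsupp.single B b)) := by
  rw [hmul_eq, bilV_single_single, map_smul, coprod_mulBasis, core_identity,
    coprod_single, coprod_single, hmul2_eq, bilV_smul_left, bilV_smul_right, smul_smul]
  congr 1
  rw [← hmul2_eq]
  exact (hmul2_deltaBasis A B).symm

lemma eps_apply (f : H) : eps f = f 0 := rfl

lemma mulBasis_eval_zero (A B : ForestClass) :
    (mulBasis A B) 0 = if A = 0 ∧ B = 0 then 1 else 0 := by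
  rw [mulBasis, Finsupp.finset_sum_apply]
  have h1 : ∀ M ∈ forestCand (sizeC A + sizeC B),
      ((nCuts A B M : ℚ) • delta M) 0 = if M = 0 then (nCuts A B M : ℚ) else 0 := by
    intro M _
    rw [Finsupp.smul_apply, delta, Finsupp.single_apply]
    by_cases h : M = 0 <;> simp [h]
  rw [Finset.sum_congr rfl h1, Finset.sum_ite_eq', if_pos (zero_mem_forestCand _), nCuts_zero]

lemma eps_hmul_single (A B : ForestClass) (a b : ℚ) :
    eps (hmul (Finsupp.single A a) (Finsupp.single B b))
      = eps (Finsupp.single A a) * eps (Finsupp.single B b) := by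
  rw [hmul_eq, bilV_single_single, map_smul]
  have h1 : eps (mulBasis A B) = if A = 0 ∧ B = 0 then 1 else 0 := by
    rw [eps_apply, mulBasis_eval_zero]
  have h2 : eps (Finsupp.single A a) = if A = 0 then a else 0 := by
    rw [eps_apply, Finsupp.single_apply]
  have h3 : eps (Finsupp.single B b) = if B = 0 then b else 0 := by
    rw [eps_apply, Finsupp.single_apply]
  rw [h1, h2, h3, smul_eq_mul]
  by_cases hA : A = 0 <;> by_cases hB : B = 0 <;> simp [hA, hB]

lemma counitFst_single (p : ForestClass × ForestClass) (c : ℚ) :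
    counitFst (Finsupp.single p c) = c • (if p.1 = 0 then delta p.2 else 0) := by
  rw [counitFst, Finsupp.lsum_single, LinearMap.toSpanSingleton_apply]

lemma counitSnd_single (p : ForestClass × ForestClass) (c : ℚ) :
    counitSnd (Finsupp.single p c) = c • (if p.2 = 0 then delta p.1 else 0) := by
  rw [counitSnd, Finsupp.lsum_single, LinearMap.toSpanSingleton_apply]

lemma counitFst_deltaBasis (M : ForestClass) : counitFst (deltaBasis M) = delta M := by
  rw [deltaBasis, map_sum]
  have h1 : ∀ A ∈ M.powerset.toFinset,
      counitFst (Finsupp.single (A, M - A) (1:ℚ)) = if A = 0 then delta (M - A) else 0 := by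
    intro A _
    rw [counitFst_single, one_smul]
  rw [Finset.sum_congr rfl h1, Finset.sum_ite_eq' M.powerset.toFinset 0 (fun A => delta (M - A)),
    if_pos (mem_pows.mpr zero_le), tsub_zero]

lemma counitSnd_deltaBasis (M : ForestClass) : counitSnd (deltaBasis M) = delta M := by
  rw [deltaBasis, map_sum]
  have h1 : ∀ A ∈ M.powerset.toFinset,
      counitSnd (Finsupp.single (A, M - A) (1:ℚ)) = if M - A = 0 then delta A else 0 := by
    intro A _
    rw [counitSnd_single, one_smul]
  rw [Finset.sum_congr rfl h1]
  rw [Finset.sum_eq_single_of_mem M (mem_pows.mpr le_rfl)]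
  · rw [if_pos (tsub_self M)]
  · intro A hA hne
    rw [if_neg]
    intro h0
    exact hne (le_antisymm (mem_pows.mp hA) (tsub_eq_zero_iff_le.mp h0))

lemma coprodFst_single (p : ForestClass × ForestClass) (c : ℚ) :
    coprodFst (Finsupp.single p c)
      = c • ∑ A ∈ p.1.powerset.toFinset, Finsupp.single (A, p.1 - A, p.2) 1 := by
  rw [coprodFst, Finsupp.lsum_single, LinearMap.toSpanSingleton_apply]

lemma coprodSnd_single (p : ForestClass × ForestClass) (c : ℚ) :
    coprodSnd (Finsupp.single p c)
      = c • ∑ A ∈ p.2.powerset.toFinset, Finsupp.single (p.1, A, p.2 - A) 1 := by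
  rw [coprodSnd, Finsupp.lsum_single, LinearMap.toSpanSingleton_apply]

lemma coassoc_deltaBasis (M : ForestClass) :
    coprodFst (deltaBasis M) = coprodSnd (deltaBasis M) := by
  rw [deltaBasis, map_sum, map_sum]
  have h1 : ∀ B ∈ M.powerset.toFinset, coprodFst (Finsupp.single (B, M - B) (1:ℚ))
      = ∑ X ∈ B.powerset.toFinset, Finsupp.single (X, B - X, M - B) (1:ℚ) := by
    intro B _
    rw [coprodFst_single, one_smul]
  have h2 : ∀ A ∈ M.powerset.toFinset, coprodSnd (Finsupp.single (A, M - A) (1:ℚ))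
      = ∑ Y ∈ (M - A).powerset.toFinset, Finsupp.single (A, Y, M - A - Y) (1:ℚ) := by
    intro A _
    rw [coprodSnd_single, one_smul]
  rw [Finset.sum_congr rfl h1, Finset.sum_congr rfl h2,
    Finset.sum_sigma' M.powerset.toFinset (fun B => B.powerset.toFinset),
    Finset.sum_sigma' M.powerset.toFinset (fun A => (M - A).powerset.toFinset)]
  refine Finset.sum_nbij' (fun x => ⟨x.2, x.1 - x.2⟩) (fun y => ⟨y.1 + y.2, y.1⟩)
    ?_ ?_ ?_ ?_ ?_
  · intro x hx
    obtain ⟨hx1, hx2⟩ := Finset.mem_sigma.mp hx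
    refine Finset.mem_sigma.mpr ⟨mem_pows.mpr ?_, mem_pows.mpr ?_⟩
    · exact le_trans (mem_pows.mp hx2) (mem_pows.mp hx1)
    · exact tsub_le_tsub_right (mem_pows.mp hx1) _
  · intro y hy
    obtain ⟨hy1, hy2⟩ := Finset.mem_sigma.mp hy
    refine Finset.mem_sigma.mpr ⟨mem_pows.mpr ?_, mem_pows.mpr le_self_add⟩
    calc y.1 + y.2 ≤ y.1 + (M - y.1) := add_le_add_right (mem_pows.mp hy2) _
      _ = M := add_tsub_cancel_of_le (mem_pows.mp hy1)
  · intro x hx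
    obtain ⟨hx1, hx2⟩ := Finset.mem_sigma.mp hx
    have h := add_tsub_cancel_of_le (mem_pows.mp hx2)
    rcases x with ⟨x1, x2⟩
    simp only at h ⊢
    simp [h]
  · intro y hy
    rcases y with ⟨y1, y2⟩
    simp [add_tsub_cancel_left]
  · intro x hx
    obtain ⟨hx1, hx2⟩ := Finset.mem_sigma.mp hx
    rw [tsub_tsub, add_tsub_cancel_of_le (mem_pows.mp hx2)]

lemma swap_deltaBasis (M : ForestClass) :
    Finsupp.mapDomain Prod.swap (deltaBasis M) = deltaBasis M := by
  rw [deltaBasis, Finsupp.mapDomain_finset_sum,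
    Finset.sum_congr rfl fun A _ => Finsupp.mapDomain_single]
  refine Finset.sum_nbij' (fun A => M - A) (fun A => M - A) ?_ ?_ ?_ ?_ ?_
  · intro A _
    exact mem_pows.mpr tsub_le_self
  · intro A _
    exact mem_pows.mpr tsub_le_self
  · intro A hA
    exact tsub_tsub_cancel_of_le (mem_pows.mp hA)
  · intro A hA
    exact tsub_tsub_cancel_of_le (mem_pows.mp hA)
  · intro A hA
    rw [tsub_tsub_cancel_of_le (mem_pows.mp hA)]
    rfl

end Assembly

/-- `Δ` is coassociative and cocommutative, `ε` is a counit for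
`Δ`, and both `Δ` and `ε` are homomorphisms of unital ℚ-algebras (`H ⊗ H`
carrying the product induced by the Hall product).  Hence
`(H, ×, δ_∅, Δ, ε)` is a cocommutative bialgebra over ℚ. -/
theorem hall_bialgebra :
    -- coassociativity
    (∀ f : H, coprodFst (coprod f) = coprodSnd (coprod f)) ∧
    -- cocommutativity
    (∀ f : H, Finsupp.mapDomain Prod.swap (coprod f) = coprod f) ∧
    -- counit axioms
    (∀ f : H, counitFst (coprod f) = f) ∧
    (∀ f : H, counitSnd (coprod f) = f) ∧
    -- Δ is a homomorphism of unital ℚ-algebras (it is linear by construction)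
    (∀ f g : H, coprod (hmul f g) = hmul2 (coprod f) (coprod g)) ∧
    (coprod (delta 0) = Finsupp.single (0, 0) 1) ∧
    -- ε is a homomorphism of unital ℚ-algebras
    (∀ f g : H, eps (hmul f g) = eps f * eps g) ∧
    (eps (delta 0) = 1) := by

  refine ⟨?_, ?_, ?_, ?_, ?_, ?_, ?_, ?_⟩
  · intro f
    induction f using Finsupp.induction_linear with
    | zero => rw [map_zero, map_zero, map_zero]
    | add f g hf hg => rw [map_add, map_add, map_add, hf, hg]
    | single M a => rw [coprod_single, map_smul, map_smul, coassoc_deltaBasis]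
  · intro f
    induction f using Finsupp.induction_linear with
    | zero => rw [map_zero, Finsupp.mapDomain_zero]
    | add f g hf hg => rw [map_add, Finsupp.mapDomain_add, hf, hg]
    | single M a => rw [coprod_single, Finsupp.mapDomain_smul, swap_deltaBasis]
  · intro f
    induction f using Finsupp.induction_linear with
    | zero => rw [map_zero, map_zero]
    | add f g hf hg => rw [map_add, map_add, hf, hg]
    | single M a =>
        rw [coprod_single, map_smul, counitFst_deltaBasis, delta, Finsupp.smul_single,
          smul_eq_mul, mul_one]
  · intro f
    induction f using Finsupp.induction_linear with
    | zero => rw [map_zero, map_zero]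
    | add f g hf hg => rw [map_add, map_add, hf, hg]
    | single M a =>
        rw [coprod_single, map_smul, counitSnd_deltaBasis, delta, Finsupp.smul_single,
          smul_eq_mul, mul_one]
  · intro f g
    induction f using Finsupp.induction_linear with
    | zero => rw [hmul_zero_left, map_zero, hmul2_zero_left]
    | add f f' hf hf' => rw [hmul_add_left, map_add, map_add, hmul2_add_left, hf, hf']
    | single A a =>
        induction g using Finsupp.induction_linear with
        | zero => rw [hmul_zero_right, map_zero, hmul2_zero_right]
        | add g g' hg hg' => rw [hmul_add_right, map_add, map_add, hmul2_add_right, hg, hg']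
        | single B b => exact coprod_hmul_single A B a b
  · rw [coprod_delta, deltaBasis]
    simp
  · intro f g
    induction f using Finsupp.induction_linear with
    | zero => rw [hmul_zero_left, map_zero, zero_mul]
    | add f f' hf hf' => rw [hmul_add_left, map_add, map_add, add_mul, hf, hf']
    | single A a =>
        induction g using Finsupp.induction_linear with
        | zero => rw [hmul_zero_right, map_zero, mul_zero]
        | add g g' hg hg' => rw [hmul_add_right, map_add, map_add, mul_add, hg, hg']
        | single B b => exact eps_hmul_single A B a b
  · rw [eps_apply, delta, Finsupp.single_eq_same]

end CK
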